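/- Let A be a finite set of integers with minimum element 0, maximum element b, and gcd of its elements equal to 1, and let B be the image of A in ℤ/bℤ. Let a be in the range 1 ≤ a ≤ b−1, let k ≥ 1, and suppose that |kB| ≥ b − N_{a,A}. Then n_{a,A} + (k−1)b ∈ NA whenever N ≥ 2k + b − |kB| − 1. -/

import Mathlib

open Pointwise

/-- The `N`-fold sumset of a finite set `A` (sums of `N` not-necessarily-distinct elements),
with the `0`-fold sumset being `{0}`. -/
def nfold {α : Type*} [AddMonoid α] [DecidableEq α] (A : Finset α) : ℕ → Finset α
  | 0 => {0}
  | n + 1 => nfold A n + A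

/-- `postP A` is the set of integers expressible as a finite (nonempty) sum of elements of `A`. -/
def postP (A : Finset ℤ) : Set ℤ := {n | ∃ N : ℕ, 1 ≤ N ∧ n ∈ nfold A N}

/-- The exceptional set `E(A)`. -/
def postE (A : Finset ℤ) : Set ℤ := {n | 1 ≤ n ∧ n ∉ postP A}

/-- `n_{a,A}`: the least `n ≥ 1` with `n ∈ P(A)` and `n ≡ a (mod b)`. -/
noncomputable def nmin (A : Finset ℤ) (b a : ℤ) : ℤ :=
  sInf {n : ℤ | 1 ≤ n ∧ n ∈ postP A ∧ n % b = a % b}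

/-- `N_{a,A}`: the least `N ≥ 1` with `n_{a,A} ∈ NA`. -/
noncomputable def Nmin (A : Finset ℤ) (b a : ℤ) : ℕ :=
  sInf {N : ℕ | 1 ≤ N ∧ nmin A b a ∈ nfold A N}

/-- `N_A^* = max_{1 ≤ a ≤ b-1} N_{a,A}`. -/
noncomputable def Nstar (A : Finset ℤ) (b : ℤ) : ℕ :=
  (Finset.Icc 1 (b - 1)).sup (fun a => Nmin A b a)

section Helpers

variable {α : Type*} [AddCommMonoid α] [DecidableEq α] {A : Finset α}

lemma nfold_zero (A : Finset α) : nfold A 0 = {0} := rfl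

lemma nfold_succ (A : Finset α) (n : ℕ) : nfold A (n + 1) = nfold A n + A := rfl

lemma mem_nfold_add {x y : α} {p q : ℕ} (hx : x ∈ nfold A p) (hy : y ∈ nfold A q) :
    x + y ∈ nfold A (p + q) := by
  induction q generalizing y with
  | zero =>
    rw [nfold_zero, Finset.mem_singleton] at hy
    subst hy; simpa using hx
  | succ q ih =>
    rw [nfold_succ] at hy
    obtain ⟨y₁, hy₁, c, hc, rfl⟩ := Finset.mem_add.1 hy
    have h2 : (x + y₁) + c ∈ nfold A (p + q) + A := Finset.add_mem_add (ih hy₁) hc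
    rw [show p + (q + 1) = (p + q) + 1 by ring, nfold_succ]
    simpa [add_assoc] using h2

lemma zero_mem_nfold (h0 : (0 : α) ∈ A) (n : ℕ) : (0 : α) ∈ nfold A n := by
  induction n with
  | zero => simp [nfold_zero]
  | succ n ih =>
    rw [nfold_succ]
    simpa using Finset.add_mem_add ih h0

lemma nfold_mono (h0 : (0 : α) ∈ A) {p q : ℕ} (h : p ≤ q) : nfold A p ⊆ nfold A q := by
  obtain ⟨d, rfl⟩ := Nat.exists_eq_add_of_le h
  intro x hx
  simpa using mem_nfold_add hx (zero_mem_nfold h0 d)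

lemma list_sum_mem_nfold {L : List α} (h : ∀ x ∈ L, x ∈ A) : L.sum ∈ nfold A L.length := by
  induction L with
  | nil => simp [nfold_zero]
  | cons x t ih =>
    have hx : x ∈ A := h x (by simp)
    have ht : t.sum ∈ nfold A t.length := ih (fun y hy => h y (by simp [hy]))
    have h2 := Finset.add_mem_add ht hx
    rw [List.sum_cons, List.length_cons, nfold_succ]
    simpa [add_comm] using h2

lemma exists_list_of_mem_nfold {x : α} {n : ℕ} (h : x ∈ nfold A n) :
    ∃ L : List α, L.length = n ∧ (∀ y ∈ L, y ∈ A) ∧ L.sum = x := by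
  induction n generalizing x with
  | zero =>
    rw [nfold_zero, Finset.mem_singleton] at h
    exact ⟨[], rfl, by simp, by simp [h]⟩
  | succ n ih =>
    rw [nfold_succ] at h
    obtain ⟨y, hy, c, hc, rfl⟩ := Finset.mem_add.1 h
    obtain ⟨L, hl, hmem, hsum⟩ := ih hy
    refine ⟨c :: L, by simp [hl], ?_, by simp [hsum, add_comm]⟩
    intro z hz
    rcases List.mem_cons.1 hz with rfl | hz
    · exact hc
    · exact hmem z hz

end Helpers

theorem stmt4 (b : ℕ) (A : Finset ℤ)
    (h0 : 0 ∈ A) (hb : (b : ℤ) ∈ A)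
    (hmin : ∀ x ∈ A, 0 ≤ x) (hmax : ∀ x ∈ A, x ≤ (b : ℤ))
    (hgcd : A.gcd id = 1)
    (a : ℤ) (ha1 : 1 ≤ a) (ha2 : a ≤ (b : ℤ) - 1)
    (k N : ℕ) (hk : 1 ≤ k)
    (hkB : (b : ℤ) - (Nmin A b a : ℤ) ≤
      ((nfold (A.image (fun x : ℤ => (x : ZMod b))) k).card : ℤ))
    (hN : 2 * (k : ℤ) + (b : ℤ) -
      ((nfold (A.image (fun x : ℤ => (x : ZMod b))) k).card : ℤ) - 1 ≤ (N : ℤ)) :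
    nmin A b a + ((k : ℤ) - 1) * b ∈ nfold A N := by
  classical
  have hb2 : 2 ≤ b := by
    have h1 : (1 : ℤ) ≤ (b : ℤ) - 1 := le_trans ha1 ha2
    have h2 : (2 : ℤ) ≤ (b : ℤ) := by linarith
    exact_mod_cast h2
  haveI : NeZero b := ⟨by omega⟩
  have hbpos : (0 : ℤ) < (b : ℤ) := by exact_mod_cast (by omega : 0 < b)
  have hamod : a % (b : ℤ) = a := Int.emod_eq_of_lt (by linarith) (by linarith)
  set S : Set ℤ := {n : ℤ | 1 ≤ n ∧ n ∈ postP A ∧ n % (b : ℤ) = a % (b : ℤ)} with hSdef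
  -- Step A : S is nonempty (via Bezout)
  have hspan : a ∈ Ideal.span (A : Set ℤ) := by
    obtain ⟨g, hg⟩ := (IsPrincipalIdealRing.principal (Ideal.span (A : Set ℤ))).principal
    have hgdvd : ∀ x ∈ A, g ∣ x := by
      intro x hx
      have hx2 : x ∈ Ideal.span (A : Set ℤ) := Ideal.subset_span (by exact_mod_cast hx)
      rw [hg] at hx2
      exact Ideal.mem_span_singleton.1 hx2
    have hdg : g ∣ A.gcd id := Finset.dvd_gcd (fun x hx => hgdvd x hx)
    rw [hgcd] at hdg
    have hunit : IsUnit g := isUnit_of_dvd_one hdg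
    have htop : Ideal.span (A : Set ℤ) = ⊤ := by
      rw [hg]; exact Ideal.span_singleton_eq_top.2 hunit
    rw [htop]; trivial
  obtain ⟨f, -, hf⟩ := Submodule.mem_span_finset.1 hspan
  have hSne : S.Nonempty := by
    set c : ℤ → ℕ := fun x => (f x % (b : ℤ)).toNat with hcdef
    have hcval : ∀ x, ((c x : ℤ)) = f x % (b : ℤ) := fun x =>
      Int.toNat_of_nonneg (Int.emod_nonneg _ (ne_of_gt hbpos))
    set n₀ : ℤ := ∑ x ∈ A, (c x : ℤ) * x with hn₀def
    have hn₀nonneg : 0 ≤ n₀ := by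
      apply Finset.sum_nonneg
      intro x hx
      exact mul_nonneg (by positivity) (hmin x hx)
    have hdvd : (b : ℤ) ∣ n₀ - a := by
      have ha' : a = ∑ x ∈ A, f x * x := by
        rw [← hf]; apply Finset.sum_congr rfl; intro x _; rw [smul_eq_mul]
      have heq : n₀ - a = ∑ x ∈ A, ((c x : ℤ) - f x) * x := by
        rw [hn₀def, ha', ← Finset.sum_sub_distrib]
        apply Finset.sum_congr rfl
        intro x _; ring
      rw [heq]
      apply Finset.dvd_sum
      intro x _
      apply dvd_mul_of_dvd_left
      rw [hcval x, Int.emod_def]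
      exact ⟨-(f x / (b : ℤ)), by ring⟩
    have hmod : n₀ % (b : ℤ) = a % (b : ℤ) := by
      have h1 : a ≡ n₀ [ZMOD (b : ℤ)] := (Int.modEq_iff_dvd).2 hdvd
      exact h1.symm
    have hn₀pos : 1 ≤ n₀ := by
      rcases lt_or_eq_of_le hn₀nonneg with h | h
      · exact h
      · exfalso
        rw [← h] at hmod
        simp at hmod
        omega
    have hmem : ∀ s : Finset ℤ, s ⊆ A →
        (∑ x ∈ s, (c x : ℤ) * x) ∈ nfold A (∑ x ∈ s, c x) := by
      intro s
      induction s using Finset.induction_on with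
      | empty => intro _; simp [nfold_zero]
      | @insert x s hxs ih =>
        intro hsub
        have hxA : x ∈ A := hsub (Finset.mem_insert_self x s)
        have h1 : (c x : ℤ) * x ∈ nfold A (c x) := by
          have h2 := list_sum_mem_nfold (A := A) (L := List.replicate (c x) x)
            (by intro y hy; rw [List.eq_of_mem_replicate hy]; exact hxA)
          simpa [List.sum_replicate, nsmul_eq_mul] using h2
        have h2 := ih (Finset.Subset.trans (Finset.subset_insert x s) hsub)
        rw [Finset.sum_insert hxs, Finset.sum_insert hxs]
        exact mem_nfold_add h1 h2
    have hn₀mem : n₀ ∈ nfold A (∑ x ∈ A, c x) := hmem A (Finset.Subset.refl A)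
    have hKpos : 1 ≤ ∑ x ∈ A, c x := by
      by_contra h
      have hz : (∑ x ∈ A, c x) = 0 := by omega
      rw [hz, nfold_zero, Finset.mem_singleton] at hn₀mem
      omega
    exact ⟨n₀, hn₀pos, ⟨∑ x ∈ A, c x, hKpos, hn₀mem⟩, hmod⟩
  have hSbdd : BddBelow S := ⟨1, fun y hy => hy.1⟩
  -- Step B : m := nmin is in S
  set m : ℤ := nmin A (b : ℤ) a with hmdef
  have hmS : m ∈ S := Int.csInf_mem hSne hSbdd
  have hmle : ∀ y ∈ S, m ≤ y := fun y hy => csInf_le hSbdd hy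
  obtain ⟨hm1, hmP, hmmod⟩ := hmS
  -- Step C : M := Nmin
  set M : ℕ := Nmin A (b : ℤ) a with hMdef
  have hTne : ∃ n, n ∈ {N : ℕ | 1 ≤ N ∧ nmin A (b : ℤ) a ∈ nfold A N} := by
    obtain ⟨N₀, hN₀, hmem⟩ := hmP
    exact ⟨N₀, hN₀, hmem⟩
  have hMmem : M ∈ {N : ℕ | 1 ≤ N ∧ nmin A (b : ℤ) a ∈ nfold A N} := Nat.sInf_mem hTne
  have hMle : ∀ N₁, 1 ≤ N₁ → m ∈ nfold A N₁ → M ≤ N₁ := fun N₁ h1 h2 => Nat.sInf_le ⟨h1, h2⟩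
  obtain ⟨hM1, hmM⟩ := hMmem
  -- list representation of m
  obtain ⟨L, hLlen, hLmem, hLsum⟩ := exists_list_of_mem_nfold (hmM : m ∈ nfold A M)
  set σ : ℕ → ℤ := fun i => (L.take i).sum with hσdef
  have hσnonneg : ∀ i, 0 ≤ σ i := by
    intro i
    apply List.sum_nonneg
    intro x hx
    exact hmin x (hLmem x (List.take_subset i L hx))
  have hσmono : ∀ i j, i ≤ j → σ i ≤ σ j := by
    intro i j hij
    have key : ∀ p : ℕ, σ p ≤ σ (p + 1) := by
      intro p
      by_cases hp : p < L.length
      · have h1 := List.sum_take_succ L p hp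
        have h2 : 0 ≤ L[p] := hmin _ (hLmem _ (List.getElem_mem hp))
        show (L.take p).sum ≤ (L.take (p + 1)).sum
        rw [h1]
        linarith
      · push_neg at hp
        have h1 : L.take p = L := List.take_of_length_le hp
        have h2 : L.take (p + 1) = L := List.take_of_length_le (by omega)
        show (L.take p).sum ≤ (L.take (p + 1)).sum
        rw [h1, h2]
    exact monotone_nat_of_le_succ key hij
  have hsplit : ∀ i, m = σ i + (L.drop i).sum := by
    intro i
    show m = (L.take i).sum + (L.drop i).sum
    rw [← List.sum_append, List.take_append_drop]
    exact hLsum.symm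
  have hdropnonneg : ∀ i, 0 ≤ (L.drop i).sum := by
    intro i
    apply List.sum_nonneg
    intro x hx
    exact hmin x (hLmem x (List.drop_subset i L hx))
  have hσle : ∀ i, σ i ≤ m := by
    intro i
    have h1 := hsplit i
    have h2 := hdropnonneg i
    omega
  -- key sets
  set B : Finset (ZMod b) := A.image (fun x : ℤ => (x : ZMod b)) with hBdef
  set Kc : ℕ := (nfold B k).card with hKcdef
  have hKcb : Kc ≤ b := by
    have h1 : (nfold B k).card ≤ Fintype.card (ZMod b) := Finset.card_le_univ _
    rwa [ZMod.card b] at h1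
  set r : ℕ := b - Kc with hrdef
  have hrM : r ≤ M := by
    have h1 : (b : ℤ) ≤ (M : ℤ) + (Kc : ℤ) := by linarith [hkB]
    have h2 : b ≤ M + Kc := by exact_mod_cast h1
    omega
  -- distinctness of residues of partial sums
  have hdist : ∀ i l, i < l → l ≤ M → ((σ i : ℤ) : ZMod b) ≠ ((σ l : ℤ) : ZMod b) := by
    intro i l hil hlM heq
    set chunk : ℤ := σ l - σ i with hchunkdef
    have hchunk0 : 0 ≤ chunk := by
      have := hσmono i l (le_of_lt hil)
      omega
    have hchunkdvd : (b : ℤ) ∣ chunk := by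
      have hc : ((chunk : ℤ) : ZMod b) = 0 := by
        rw [hchunkdef]
        push_cast
        rw [← heq, sub_self]
      exact (ZMod.intCast_zmod_eq_zero_iff_dvd _ _).1 hc
    set L' : List ℤ := L.take i ++ L.drop l with hL'def
    have hL'mem : ∀ x ∈ L', x ∈ A := by
      intro x hx
      rcases List.mem_append.1 hx with h | h
      · exact hLmem x (List.take_subset i L h)
      · exact hLmem x (List.drop_subset l L h)
    have hL'len : L'.length = i + (M - l) := by
      rw [hL'def, List.length_append, List.length_take, List.length_drop, hLlen]
      omega
    have hL'sum : L'.sum = m - chunk := by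
      rw [hL'def, List.sum_append]
      have h1 := hsplit l
      have h2 : (L.take i).sum = σ i := rfl
      omega
    have hmem' : m - chunk ∈ nfold A (i + (M - l)) := by
      rw [← hL'sum, ← hL'len]
      exact list_sum_mem_nfold hL'mem
    rcases eq_or_lt_of_le hchunk0 with hc0 | hcpos
    · -- chunk = 0 : contradicts minimality of M
      rw [← hc0, sub_zero] at hmem'
      have hpos : 1 ≤ i + (M - l) := by
        by_contra h
        have hz : i + (M - l) = 0 := by omega
        rw [hz, nfold_zero, Finset.mem_singleton] at hmem'
        omega
      have := hMle (i + (M - l)) hpos hmem'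
      omega
    · -- chunk > 0 : contradicts minimality of m
      have hm'mod : (m - chunk) % (b : ℤ) = a % (b : ℤ) := by
        obtain ⟨d, hd⟩ := hchunkdvd
        have h1 : (m - chunk) % (b : ℤ) = m % (b : ℤ) := by
          rw [hd, sub_eq_add_neg, ← mul_neg, Int.add_mul_emod_self_left]
        rw [h1, hmmod]
      have hm'nonneg : 0 ≤ m - chunk := by
        have h1 := hsplit l
        have h2 := hdropnonneg l
        have h3 := hσnonneg i
        omega
      have hm'pos : 1 ≤ m - chunk := by
        rcases eq_or_lt_of_le hm'nonneg with h | h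
        · exfalso
          rw [← h] at hm'mod
          simp at hm'mod
          omega
        · omega
      have hcnt : 1 ≤ i + (M - l) := by
        by_contra h
        have hz : i + (M - l) = 0 := by omega
        rw [hz, nfold_zero, Finset.mem_singleton] at hmem'
        omega
      have := hmle _ ⟨hm'pos, ⟨i + (M - l), hcnt, hmem'⟩, hm'mod⟩
      omega
  -- pigeonhole
  set T : Finset (ZMod b) :=
    (Finset.range (r + 1)).image (fun i => (a : ZMod b) - ((σ i : ℤ) : ZMod b)) with hTdef
  have hinj : Set.InjOn (fun i => (a : ZMod b) - ((σ i : ℤ) : ZMod b))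
      ↑(Finset.range (r + 1)) := by
    intro i hi j hj hij
    simp only [Finset.coe_range, Set.mem_Iio] at hi hj
    have heq : ((σ i : ℤ) : ZMod b) = ((σ j : ℤ) : ZMod b) := by
      have := sub_right_inj.mp hij
      exact this
    by_contra hne
    rcases Nat.lt_or_ge i j with h | h
    · exact hdist i j h (by omega) heq
    · have hji : j < i := by omega
      exact hdist j i hji (by omega) heq.symm
  have hTcard : T.card = r + 1 := by
    rw [hTdef, Finset.card_image_of_injOn hinj, Finset.card_range]
  have hinter : (T ∩ nfold B k).Nonempty := by
    rw [← Finset.card_pos]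
    have h1 := Finset.card_inter_add_card_union T (nfold B k)
    have h2 : (T ∪ nfold B k).card ≤ b := by
      have h3 := Finset.card_le_univ (T ∪ nfold B k)
      rwa [ZMod.card b] at h3
    have h3 : T.card + (nfold B k).card = r + 1 + Kc := by rw [hTcard, hKcdef]
    omega
  obtain ⟨x, hx⟩ := hinter
  rw [Finset.mem_inter] at hx
  obtain ⟨hxT, hxK⟩ := hx
  rw [hTdef, Finset.mem_image] at hxT
  obtain ⟨i, hi, hxi⟩ := hxT
  rw [Finset.mem_range] at hi
  have hir : i ≤ r := by omega
  -- lift x ∈ nfold B k to an integer in [0, k(b-1)]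
  have hlift : ∀ (j : ℕ) (ρ : ZMod b), ρ ∈ nfold B j →
      ∃ t : ℤ, t ∈ nfold A j ∧ 0 ≤ t ∧ t ≤ (j : ℤ) * ((b : ℤ) - 1) ∧ ((t : ℤ) : ZMod b) = ρ := by
    intro j
    induction j with
    | zero =>
      intro ρ hρ
      rw [nfold_zero, Finset.mem_singleton] at hρ
      exact ⟨0, by simp [nfold_zero], le_refl 0, by simp, by simp [hρ]⟩
    | succ j ih =>
      intro ρ hρ
      rw [nfold_succ] at hρ
      obtain ⟨ρ₁, h1, ρ₂, h2, rfl⟩ := Finset.mem_add.1 hρ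
      obtain ⟨t, ht, ht0, htb, htc⟩ := ih ρ₁ h1
      rw [hBdef, Finset.mem_image] at h2
      obtain ⟨z, hzA, hz⟩ := h2
      by_cases hz0 : ((z : ℤ) : ZMod b) = 0
      · refine ⟨t, ?_, ht0, ?_, ?_⟩
        · have := Finset.add_mem_add ht h0
          rw [nfold_succ]
          simpa using this
        · have hb1 : (0 : ℤ) ≤ (b : ℤ) - 1 := by linarith
          push_cast
          nlinarith
        · rw [htc, ← hz, hz0, add_zero]
      · have hzb : z ≠ (b : ℤ) := by
          intro h
          apply hz0
          rw [h]
          exact_mod_cast ZMod.natCast_self b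
        have hz1 : z ≤ (b : ℤ) - 1 := by
          have := hmax z hzA
          omega
        refine ⟨t + z, ?_, ?_, ?_, ?_⟩
        · rw [nfold_succ]; exact Finset.add_mem_add ht hzA
        · have := hmin z hzA; omega
        · push_cast; linarith
        · push_cast; rw [htc, hz]
  obtain ⟨τ, hτmem, hτ0, hτb, hτc⟩ := hlift k x hxK
  -- the integer y = σ i + τ
  set y : ℤ := σ i + τ with hydef
  have hymem : y ∈ nfold A (i + k) := by
    have hlen : (L.take i).length = i := by
      rw [List.length_take, hLlen]
      omega
    have hσi : σ i ∈ nfold A i := by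
      have h1 := list_sum_mem_nfold (A := A)
        (fun z hz => hLmem z (List.take_subset i L hz))
      rwa [hlen] at h1
    exact mem_nfold_add hσi hτmem
  have hymod : y % (b : ℤ) = a % (b : ℤ) := by
    have hcast : ((y : ℤ) : ZMod b) = ((a : ℤ) : ZMod b) := by
      rw [hydef]
      push_cast
      rw [hτc, ← hxi]
      ring
    exact (ZMod.intCast_eq_intCast_iff' _ _ _).1 hcast
  have hynonneg : 0 ≤ y := by
    have := hσnonneg i
    omega
  have hypos : 1 ≤ y := by
    rcases eq_or_lt_of_le hynonneg with h | h
    · exfalso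
      rw [← h] at hymod
      simp at hymod
      omega
    · omega
  have hmy : m ≤ y := hmle y ⟨hypos, ⟨i + k, by omega, hymem⟩, hymod⟩
  have hdvd2 : (b : ℤ) ∣ y - m := by
    have h1 : (y - m) % (b : ℤ) = 0 := by
      rw [Int.sub_emod, hymod, hmmod, sub_self, Int.zero_emod]
    exact Int.dvd_of_emod_eq_zero h1
  obtain ⟨u', hu'⟩ := hdvd2
  have hbu0 : (0 : ℤ) ≤ (b : ℤ) * u' := by linarith [hmy, hu']
  have hu'0 : 0 ≤ u' := (mul_nonneg_iff_of_pos_left hbpos).mp hbu0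
  have hu'k : u' ≤ (k : ℤ) - 1 := by
    have h1 : (b : ℤ) * u' ≤ (k : ℤ) * ((b : ℤ) - 1) := by
      linarith [hu', hτb, hσle i, hydef]
    have e : (k : ℤ) * ((b : ℤ) - 1) = (b : ℤ) * k - k := by ring
    rw [e] at h1
    have hk1 : (1 : ℤ) ≤ (k : ℤ) := by exact_mod_cast hk
    have h2 : (b : ℤ) * u' < (b : ℤ) * k := by linarith
    have h3 : u' < (k : ℤ) := lt_of_mul_lt_mul_left h2 (le_of_lt hbpos)
    omega
  set u : ℕ := u'.toNat with hudef
  have huz : (u : ℤ) = u' := Int.toNat_of_nonneg hu'0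
  have huk : u ≤ k - 1 := by omega
  set w : ℕ := k - 1 - u with hwdef
  have hwz : (w : ℤ) = (k : ℤ) - 1 - u' := by
    have : w = k - 1 - u := hwdef
    omega
  have hwb : (w : ℤ) * (b : ℤ) ∈ nfold A w := by
    have h1 := list_sum_mem_nfold (A := A) (L := List.replicate w ((b : ℤ)))
      (by intro z hz; rw [List.eq_of_mem_replicate hz]; exact hb)
    simpa [List.sum_replicate, nsmul_eq_mul] using h1
  have htot : y + (w : ℤ) * (b : ℤ) ∈ nfold A (i + k + w) := mem_nfold_add hymem hwb
  have hrz : (r : ℤ) = (b : ℤ) - (Kc : ℤ) := by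
    have : r = b - Kc := hrdef
    omega
  have hcount : i + k + w ≤ N := by
    have h1 : (i : ℤ) ≤ (r : ℤ) := by exact_mod_cast hir
    have h2 : ((i + k + w : ℕ) : ℤ) ≤ (N : ℤ) := by
      push_cast
      rw [hwz]
      linarith [hN, hrz, hu'0, h1]
    exact_mod_cast h2
  have hfinal : m + ((k : ℤ) - 1) * (b : ℤ) = y + (w : ℤ) * (b : ℤ) := by
    have hy2 : y = m + (b : ℤ) * u' := by linarith [hu']
    rw [hwz, hy2]
    ring
  rw [hfinal]
  exact nfold_mono h0 hcount htot
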